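/- For d ≥ 3, let L_n = ∑_{k=1}^{n-1} C(n-1,k-1) · ((2k-1)!!·(2n-2k-1)!!/(2n-1)!!)^{d-1}. Then L_n = O(1/n) as n → ∞. -/

import Mathlib

open Nat Filter

/-- `(2n-1)!! = 1·3·5⋯(2n-1)`, the product of the first `n` odd positive integers. -/
def oddDF (n : ℕ) : ℕ := ∏ i ∈ Finset.range n, (2 * i + 1)

lemma oddDF_pos (n : ℕ) : 0 < oddDF n :=
  Finset.prod_pos (fun i _ => by omega)

lemma oddDF_mul_eq (n : ℕ) : oddDF n * (2 ^ n * n.factorial) = (2 * n).factorial := by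
  induction n with
  | zero => simp [oddDF]
  | succ n ih =>
    have h1 : oddDF (n + 1) = oddDF n * (2 * n + 1) := by
      simp [oddDF, Finset.prod_range_succ]
    have h2 : 2 * (n + 1) = (2 * n + 1) + 1 := by ring
    rw [h1, h2, Nat.factorial_succ, Nat.factorial_succ, Nat.factorial_succ, pow_succ]
    calc oddDF n * (2 * n + 1) * (2 ^ n * 2 * ((n + 1) * n.factorial))
        = (2 * n + 1 + 1) * ((2 * n + 1) * (oddDF n * (2 ^ n * n.factorial))) := by ring
      _ = _ := by rw [ih]

lemma choose_sq_le (n k : ℕ) : n.choose k ^ 2 ≤ (2 * n).choose (2 * k) := by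
  rw [two_mul n, two_mul k, Nat.add_choose_eq]
  have hm : ((k, k) : ℕ × ℕ) ∈ Finset.HasAntidiagonal.antidiagonal (k + k) := by simp
  have := Finset.single_le_sum (f := fun ij : ℕ × ℕ => n.choose ij.1 * n.choose ij.2)
    (fun i _ => Nat.zero_le _) hm
  simpa [sq] using this

lemma keyE {n k : ℕ} (h : k ≤ n) :
    oddDF k * oddDF (n - k) * (2 * n).choose (2 * k) = oddDF n * n.choose k := by
  have h1 := oddDF_mul_eq k
  have h2 := oddDF_mul_eq (n - k)
  have h3 := oddDF_mul_eq n
  have hc1 := Nat.choose_mul_factorial_mul_factorial h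
  have hc2 := Nat.choose_mul_factorial_mul_factorial (Nat.mul_le_mul_left 2 h)
  have hnk : 2 * n - 2 * k = 2 * (n - k) := by omega
  rw [hnk] at hc2
  have hp : (2 : ℕ) ^ k * 2 ^ (n - k) = 2 ^ n := by
    rw [← pow_add]; congr 1; omega
  have hpos : 0 < (2 * k).factorial * (2 * (n - k)).factorial :=
    Nat.mul_pos (Nat.factorial_pos _) (Nat.factorial_pos _)
  apply Nat.eq_of_mul_eq_mul_right hpos
  zify at h1 h2 h3 hc1 hc2 hp ⊢
  linear_combination (oddDF k * oddDF (n - k) : ℤ) * hc2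
    + ((oddDF n : ℤ) * n.choose k * (2 * k).factorial) * h2
    + ((oddDF n : ℤ) * n.choose k * oddDF (n - k) * 2 ^ (n - k) * (n - k).factorial) * h1
    - ((oddDF k : ℤ) * oddDF (n - k) * oddDF n * n.choose k * k.factorial * (n - k).factorial) * hp
    - ((oddDF k : ℤ) * oddDF (n - k) * oddDF n * 2 ^ n) * hc1
    - ((oddDF k : ℤ) * oddDF (n - k)) * h3

lemma keyI {n k : ℕ} (h : k ≤ n) :
    oddDF k * oddDF (n - k) * n.choose k ≤ oddDF n := by
  have h1 := keyE h
  have h2 := choose_sq_le n k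
  have hpos : 0 < n.choose k := Nat.choose_pos h
  have hk : (oddDF k * oddDF (n - k) * n.choose k) * n.choose k ≤ oddDF n * n.choose k := by
    calc (oddDF k * oddDF (n - k) * n.choose k) * n.choose k
        = oddDF k * oddDF (n - k) * n.choose k ^ 2 := by ring
      _ ≤ oddDF k * oddDF (n - k) * (2 * n).choose (2 * k) :=
          Nat.mul_le_mul_left _ h2
      _ = oddDF n * n.choose k := h1
  exact Nat.le_of_mul_le_mul_right hk hpos

lemma choose_mono_half {n a b : ℕ} (hab : a ≤ b) (hb : b ≤ n / 2) :
    n.choose a ≤ n.choose b := by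
  induction b with
  | zero => simp [Nat.le_zero.mp hab]
  | succ b ih =>
    rcases Nat.lt_or_ge a (b + 1) with hlt | hge
    · exact le_trans (ih (by omega) (by omega))
        (Nat.choose_le_succ_of_lt_half_left (by omega))
    · have : a = b + 1 := by omega
      simp [this]

lemma choose_two_le {n k : ℕ} (h2 : 2 ≤ k) (hk : k ≤ n - 2) (hn : 4 ≤ n) :
    n.choose 2 ≤ n.choose k := by
  rcases le_or_gt k (n / 2) with h | h
  · exact choose_mono_half h2 h
  · have hkn : k ≤ n := by omega
    rw [← Nat.choose_symm hkn]
    exact choose_mono_half (by omega) (by omega)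

lemma two_mul_choose_two (n : ℕ) (hn : 1 ≤ n) : 2 * n.choose 2 = n * (n - 1) := by
  obtain ⟨m, hm⟩ := Nat.even_mul_succ_self (n - 1)
  have he : (n - 1) + 1 = n := by omega
  rw [he] at hm
  have hmn : n * (n - 1) = 2 * m := by rw [mul_comm]; omega
  rw [Nat.choose_two_right, hmn]
  omega

lemma sum_inv_choose_le {n : ℕ} (hn : 4 ≤ n) :
    ∑ k ∈ Finset.Icc 1 (n - 1), ((n.choose k : ℝ))⁻¹ ≤ 4 / n := by
  have hset : Finset.Icc 1 (n - 1) = insert 1 (insert (n - 1) (Finset.Icc 2 (n - 2))) := by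
    ext x; simp only [Finset.mem_Icc, Finset.mem_insert]; omega
  have hnot1 : (1 : ℕ) ∉ insert (n - 1) (Finset.Icc 2 (n - 2)) := by
    simp only [Finset.mem_insert, Finset.mem_Icc]; omega
  have hnot2 : (n - 1) ∉ Finset.Icc 2 (n - 2) := by
    simp only [Finset.mem_Icc]; omega
  rw [hset, Finset.sum_insert hnot1, Finset.sum_insert hnot2]
  have hn0 : (0 : ℝ) < n := by positivity
  have e1 : ((n.choose 1 : ℝ))⁻¹ = 1 / n := by
    rw [Nat.choose_one_right]; simp
  have e2 : ((n.choose (n - 1) : ℝ))⁻¹ = 1 / n := by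
    have : n.choose (n - 1) = n.choose 1 := Nat.choose_symm (by omega : 1 ≤ n)
    rw [this, Nat.choose_one_right]; simp
  have hc2pos : 0 < n.choose 2 := Nat.choose_pos (by omega)
  have hmid : ∑ k ∈ Finset.Icc 2 (n - 2), ((n.choose k : ℝ))⁻¹ ≤ 2 / n := by
    have hb : ∀ k ∈ Finset.Icc 2 (n - 2), ((n.choose k : ℝ))⁻¹ ≤ ((n.choose 2 : ℝ))⁻¹ := by
      intro k hk
      simp only [Finset.mem_Icc] at hk
      have := choose_two_le hk.1 hk.2 hn
      have hpk : 0 < n.choose k := lt_of_lt_of_le hc2pos this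
      apply inv_anti₀ (by exact_mod_cast hc2pos)
      exact_mod_cast this
    calc ∑ k ∈ Finset.Icc 2 (n - 2), ((n.choose k : ℝ))⁻¹
        ≤ ∑ _k ∈ Finset.Icc 2 (n - 2), ((n.choose 2 : ℝ))⁻¹ := Finset.sum_le_sum hb
      _ = ((n - 2) + 1 - 2 : ℕ) * ((n.choose 2 : ℝ))⁻¹ := by
          rw [Finset.sum_const, Nat.card_Icc, nsmul_eq_mul]
      _ ≤ 2 / n := by
          rw [← div_eq_mul_inv, div_le_div_iff₀ (by exact_mod_cast hc2pos) hn0]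
          have key : ((n - 2) + 1 - 2) * n ≤ 2 * n.choose 2 := by
            rw [two_mul_choose_two n (by omega)]
            have h5 : (n - 2) + 1 - 2 ≤ n - 1 := by omega
            exact (Nat.mul_le_mul h5 (le_refl n)).trans (le_of_eq (mul_comm _ _))
          exact_mod_cast key
  rw [e1, e2]
  have : 1 / (n : ℝ) + (1 / n + 2 / n) = 4 / n := by ring
  linarith [hmid]

theorem stmt13 (d : ℕ) (hd : 3 ≤ d) :
    ∃ C : ℝ, ∀ᶠ n : ℕ in atTop,
      ∑ k ∈ Finset.Icc 1 (n - 1),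
          ((n - 1).choose (k - 1) : ℝ) *
            (((oddDF k : ℝ) * (oddDF (n - k) : ℝ)) / (oddDF n : ℝ)) ^ (d - 1) ≤
        C / n := by
  use 4
  filter_upwards [eventually_ge_atTop 4] with n hn
  have hterm : ∀ k ∈ Finset.Icc 1 (n - 1),
      ((n - 1).choose (k - 1) : ℝ) *
        (((oddDF k : ℝ) * (oddDF (n - k) : ℝ)) / (oddDF n : ℝ)) ^ (d - 1)
      ≤ ((n.choose k : ℝ))⁻¹ := by
    intro k hk
    simp only [Finset.mem_Icc] at hk
    have hkn : k ≤ n := by omega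
    set ρ : ℝ := ((oddDF k : ℝ) * (oddDF (n - k) : ℝ)) / (oddDF n : ℝ) with hρ
    have hcpos : (0 : ℝ) < (oddDF n : ℝ) := by exact_mod_cast oddDF_pos n
    have hC1pos : (0 : ℝ) < (n.choose k : ℝ) := by exact_mod_cast Nat.choose_pos hkn
    have hρ0 : 0 ≤ ρ := by positivity
    have hρle : ρ ≤ ((n.choose k : ℝ))⁻¹ := by
      rw [hρ, inv_eq_one_div, div_le_div_iff₀ hcpos hC1pos]
      calc (oddDF k : ℝ) * (oddDF (n - k) : ℝ) * (n.choose k : ℝ)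
          ≤ (oddDF n : ℝ) := by exact_mod_cast keyI hkn
        _ = 1 * (oddDF n : ℝ) := by ring
    have hρ1 : ρ ≤ 1 := le_trans hρle (inv_le_one_of_one_le₀ (by exact_mod_cast Nat.choose_pos hkn))
    have hpow : ρ ^ (d - 1) ≤ ρ ^ 2 := pow_le_pow_of_le_one hρ0 hρ1 (by omega)
    have hch : (n - 1).choose (k - 1) ≤ n.choose k := by
      obtain ⟨m, rfl⟩ : ∃ m, n = m + 1 := ⟨n - 1, by omega⟩
      obtain ⟨j, rfl⟩ : ∃ j, k = j + 1 := ⟨k - 1, by omega⟩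
      simp only [Nat.add_sub_cancel, Nat.choose_succ_succ]
      omega
    have hch' : ((n - 1).choose (k - 1) : ℝ) ≤ (n.choose k : ℝ) := by exact_mod_cast hch
    calc ((n - 1).choose (k - 1) : ℝ) * ρ ^ (d - 1)
        ≤ (n.choose k : ℝ) * (((n.choose k : ℝ))⁻¹) ^ 2 := by
          apply mul_le_mul hch' (le_trans hpow (pow_le_pow_left₀ hρ0 hρle 2))
            (by positivity) (le_of_lt hC1pos)
      _ = ((n.choose k : ℝ))⁻¹ := by field_simp
  calc ∑ k ∈ Finset.Icc 1 (n - 1),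
        ((n - 1).choose (k - 1) : ℝ) *
          (((oddDF k : ℝ) * (oddDF (n - k) : ℝ)) / (oddDF n : ℝ)) ^ (d - 1)
      ≤ ∑ k ∈ Finset.Icc 1 (n - 1), ((n.choose k : ℝ))⁻¹ := Finset.sum_le_sum hterm
    _ ≤ 4 / n := sum_inv_choose_le hn
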